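/- arXiv:2605.21134 — 2 statements merged into one kernel-verified Lean document; each statement's English description precedes it below -/
import Mathlib

section
/- Sound and complete supermartingale certificate for absorbing regions: let A and J be disjoint measurable subsets of S. Then there exists a measurable function V : S → [0,∞) satisfying (1) PV(s) ≤ V(s) for every s ∉ A, (2) V(s) ≥ 1 for every s ∈ A, and (3) there exists γ > 0 with V(s) ≤ 1 − γ for every s ∈ J, if and only if sup_{s ∈ J} P_{δ_s}(σ_A < ∞) < 1 (i.e., there exists γ > 0 such that P_{δ_s}(σ_A < ∞) ≤ 1 − γ for every s ∈ J). -/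
open MeasureTheory ProbabilityTheory Filter Set ENNReal

/-- The one-step shift on trajectories: `shift ω n = ω (n+1)`. -/
def shift {S : Type*} (ω : ℕ → S) : ℕ → S := fun n => ω (n + 1)

/-- `Fin A`: the event of visiting `A` only finitely many times. -/
def finVisits {S : Type*} (A : Set S) : Set (ℕ → S) :=
  {ω | ∃ n, ∀ m, n ≤ m → ω m ∉ A}

/-- `Inf B`: the event of visiting `B` infinitely many times. -/
def infVisits {S : Type*} (B : Set S) : Set (ℕ → S) :=
  {ω | ∀ n, ∃ m, n ≤ m ∧ ω m ∈ B}

/-- `{σ_A < ∞}`: the event that the first return time to `A` is finite,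
where `σ_A = 1 + τ_A ∘ shift`; equivalently `∃ n, ω (n+1) ∈ A`. -/
def retEvent {S : Type*} (A : Set S) : Set (ℕ → S) := {ω | ∃ n, ω (n + 1) ∈ A}

/-- `I^ω`: the event of remaining in `I` forever. -/
def invEvent {S : Type*} (I : Set S) : Set (ℕ → S) := {ω | ∀ n, ω n ∈ I}

/-- Prepend a state to a trajectory. -/
def consTraj {S : Type*} (s : S) (ω : ℕ → S) : ℕ → S
  | 0 => s
  | n + 1 => ω n

/-- `T` is the Ionescu–Tulcea trajectory kernel of the time-homogeneous Markov chain with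
transition kernel `P`: `T s` is the law on `S^ℕ` (with the product σ-algebra) of the
coordinate Markov chain with kernel `P` started at `s`.  It is uniquely characterised
(by the Ionescu–Tulcea theorem) by the one-step Markov recursion below: the trajectory
from `s` is `s` followed by a trajectory started from a `P s`-distributed state.
The trajectory measure `P_ξ` with initial distribution `ξ` is then `ξ.bind (fun s => T s)`,
and `P_{δ_s} = T s`. -/
def IsTrajKernel {S : Type*} [MeasurableSpace S] (P : Kernel S S)
    (T : Kernel S (ℕ → S)) : Prop :=
  ∀ s : S, (T s : Measure (ℕ → S)) =
    ((P s : Measure S).bind (fun u => (T u : Measure (ℕ → S)))).map (consTraj s)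

set_option linter.unusedSectionVars false

section Aux

variable {S : Type*} [MeasurableSpace S]

/-- The event of hitting `A` at some time `n ≥ 0`. -/
def hitEvent (A : Set S) : Set (ℕ → S) := {ω | ∃ n, ω n ∈ A}

/-- The event of hitting `A` by time `n`. -/
def hitBy (A : Set S) (n : ℕ) : Set (ℕ → S) := {ω | ∃ m ≤ n, ω m ∈ A}

lemma measurable_shift : Measurable (shift (S := S)) :=
  measurable_pi_iff.2 fun n => measurable_pi_apply (n + 1)

lemma measurable_consTraj (s : S) : Measurable (consTraj s) := by
  refine measurable_pi_iff.2 fun n => ?_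
  cases n with
  | zero => exact measurable_const
  | succ n => exact measurable_pi_apply n

lemma shift_consTraj (s : S) (ω : ℕ → S) : shift (consTraj s ω) = ω := rfl

lemma measurableSet_hitEvent {A : Set S} (hA : MeasurableSet A) :
    MeasurableSet (hitEvent A) := by
  have : hitEvent A = ⋃ n, (fun ω : ℕ → S => ω n) ⁻¹' A := by
    ext ω; simp [hitEvent]
  rw [this]
  exact MeasurableSet.iUnion fun n => (measurable_pi_apply n) hA

lemma measurableSet_retEvent {A : Set S} (hA : MeasurableSet A) :
    MeasurableSet (retEvent A) := by
  have : retEvent A = ⋃ n, (fun ω : ℕ → S => ω (n + 1)) ⁻¹' A := by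
    ext ω; simp [retEvent]
  rw [this]
  exact MeasurableSet.iUnion fun n => (measurable_pi_apply (n + 1)) hA

lemma measurableSet_hitBy {A : Set S} (hA : MeasurableSet A) (n : ℕ) :
    MeasurableSet (hitBy A n) := by
  have : hitBy A n = ⋃ m ∈ Finset.range (n + 1), (fun ω : ℕ → S => ω m) ⁻¹' A := by
    ext ω; simp [hitBy, Nat.lt_succ_iff]
  rw [this]
  exact MeasurableSet.biUnion (Finset.range (n + 1)).countable_toSet
    fun m _ => (measurable_pi_apply m) hA

variable (P : Kernel S S) [IsMarkovKernel P] (T : Kernel S (ℕ → S)) [IsMarkovKernel T]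

lemma T_shift (hT : IsTrajKernel P T) (s : S) {E : Set (ℕ → S)} (hE : MeasurableSet E) :
    T s (shift ⁻¹' E) = ∫⁻ u, T u E ∂(P s) := by
  have h1 : consTraj s ⁻¹' (shift ⁻¹' E) = E := by
    ext ω; simp [Set.mem_preimage, shift_consTraj]
  rw [hT s, Measure.map_apply (measurable_consTraj s) (measurable_shift hE), h1,
    Measure.bind_apply hE T.measurable.aemeasurable]

lemma T_coord0_mem (hT : IsTrajKernel P T) {s : S} {A : Set S} (hA : MeasurableSet A)
    (hs : s ∈ A) : T s ((fun ω : ℕ → S => ω 0) ⁻¹' A) = 1 := by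
  have hpre : consTraj s ⁻¹' ((fun ω : ℕ → S => ω 0) ⁻¹' A) = Set.univ := by
    ext ω; simp [Set.mem_preimage, consTraj, hs]
  rw [hT s, Measure.map_apply (measurable_consTraj s) ((measurable_pi_apply 0) hA), hpre,
    Measure.bind_apply MeasurableSet.univ T.measurable.aemeasurable]
  simp

lemma T_coord0_not_mem (hT : IsTrajKernel P T) {s : S} {A : Set S} (hA : MeasurableSet A)
    (hs : s ∉ A) : T s ((fun ω : ℕ → S => ω 0) ⁻¹' A) = 0 := by
  have hpre : consTraj s ⁻¹' ((fun ω : ℕ → S => ω 0) ⁻¹' A) = (∅ : Set (ℕ → S)) := by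
    ext ω; simp [Set.mem_preimage, consTraj, hs]
  rw [hT s, Measure.map_apply (measurable_consTraj s) ((measurable_pi_apply 0) hA), hpre]
  simp

end Aux

section Aux2

variable {S : Type*} [MeasurableSpace S]
variable (P : Kernel S S) [IsMarkovKernel P] (T : Kernel S (ℕ → S)) [IsMarkovKernel T]

/-- Probability of hitting `A` within `n` steps, defined by the one-step recursion. -/
noncomputable def hApprox (A : Set S) : ℕ → S → ℝ≥0∞
  | 0 => A.indicator 1
  | n + 1 => fun s => A.indicator 1 s + Set.indicator Aᶜ (fun s => ∫⁻ u, hApprox A n u ∂(P s)) s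

lemma hApprox_mem {A : Set S} {s : S} (hs : s ∈ A) : ∀ n, hApprox P A n s = 1
  | 0 => by simp [hApprox, hs]
  | n + 1 => by simp [hApprox, hs]

lemma hApprox_not_mem_zero {A : Set S} {s : S} (hs : s ∉ A) : hApprox P A 0 s = 0 := by
  simp [hApprox, hs]

lemma hApprox_not_mem_succ {A : Set S} {s : S} (hs : s ∉ A) (n : ℕ) :
    hApprox P A (n + 1) s = ∫⁻ u, hApprox P A n u ∂(P s) := by
  simp [hApprox, hs]

lemma measurable_hApprox {A : Set S} (hA : MeasurableSet A) :
    ∀ n, Measurable (hApprox P A n)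
  | 0 => (measurable_const.indicator hA)
  | n + 1 => by
    refine Measurable.add (measurable_const.indicator hA) ?_
    exact ((measurable_hApprox hA n).lintegral_kernel (κ := P)).indicator hA.compl

lemma hitBy_succ (A : Set S) (n : ℕ) :
    hitBy A (n + 1) = ((fun ω : ℕ → S => ω 0) ⁻¹' A) ∪ shift ⁻¹' (hitBy A n) := by
  ext ω
  simp only [hitBy, Set.mem_setOf_eq, Set.mem_union, Set.mem_preimage, shift]
  constructor
  · rintro ⟨m, hm, hmem⟩
    cases m with
    | zero => exact Or.inl hmem
    | succ m => exact Or.inr ⟨m, Nat.succ_le_succ_iff.mp hm, hmem⟩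
  · rintro (h | ⟨m, hm, hmem⟩)
    · exact ⟨0, Nat.zero_le _, h⟩
    · exact ⟨m + 1, Nat.succ_le_succ hm, hmem⟩

lemma T_hitBy (hT : IsTrajKernel P T) {A : Set S} (hA : MeasurableSet A) :
    ∀ n, ∀ s, T s (hitBy A n) = hApprox P A n s := by
  intro n
  induction n with
  | zero =>
    intro s
    have h0 : hitBy A 0 = (fun ω : ℕ → S => ω 0) ⁻¹' A := by
      ext ω; simp [hitBy]
    by_cases hs : s ∈ A
    · rw [h0, T_coord0_mem P T hT hA hs, hApprox_mem P hs]
    · rw [h0, T_coord0_not_mem P T hT hA hs, hApprox_not_mem_zero P hs]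
  | succ n ih =>
    intro s
    rw [hitBy_succ]
    by_cases hs : s ∈ A
    · rw [hApprox_mem P hs]
      refine le_antisymm prob_le_one ?_
      calc (1 : ℝ≥0∞) = T s ((fun ω : ℕ → S => ω 0) ⁻¹' A) :=
            (T_coord0_mem P T hT hA hs).symm
        _ ≤ _ := measure_mono Set.subset_union_left
    · rw [Set.union_comm, hApprox_not_mem_succ P hs]
      have hnull : T s ((fun ω : ℕ → S => ω 0) ⁻¹' A) = 0 := T_coord0_not_mem P T hT hA hs
      have : T s (shift ⁻¹' hitBy A n ∪ (fun ω : ℕ → S => ω 0) ⁻¹' A)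
          = T s (shift ⁻¹' hitBy A n) := by
        refine le_antisymm ?_ (measure_mono Set.subset_union_left)
        calc T s (shift ⁻¹' hitBy A n ∪ (fun ω : ℕ → S => ω 0) ⁻¹' A)
            ≤ T s (shift ⁻¹' hitBy A n) + T s ((fun ω : ℕ → S => ω 0) ⁻¹' A) :=
              measure_union_le _ _
          _ = T s (shift ⁻¹' hitBy A n) := by rw [hnull, add_zero]
      rw [this, T_shift P T hT s (measurableSet_hitBy hA n)]
      exact lintegral_congr fun u => ih u

end Aux2

section Main

variable {S : Type*} [MeasurableSpace S]
variable (P : Kernel S S) [IsMarkovKernel P] (T : Kernel S (ℕ → S)) [IsMarkovKernel T]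

lemma hitEvent_eq_iUnion (A : Set S) : hitEvent A = ⋃ n, hitBy A n := by
  ext ω
  simp only [hitEvent, hitBy, Set.mem_setOf_eq, Set.mem_iUnion]
  exact ⟨fun ⟨n, hn⟩ => ⟨n, n, le_refl n, hn⟩, fun ⟨n, m, _, hm⟩ => ⟨m, hm⟩⟩

lemma T_hitEvent (hT : IsTrajKernel P T) {A : Set S} (hA : MeasurableSet A) (s : S) :
    T s (hitEvent A) = ⨆ n, hApprox P A n s := by
  have hmono : Monotone (hitBy A) := by
    intro i j hij ω
    rintro ⟨m, hm, hmem⟩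
    exact ⟨m, hm.trans hij, hmem⟩
  rw [hitEvent_eq_iUnion, hmono.directed_le.measure_iUnion]
  exact iSup_congr fun n => T_hitBy P T hT hA n s

lemma retEvent_eq_preimage (A : Set S) : retEvent A = shift ⁻¹' hitEvent A := rfl

lemma retEvent_subset_hitEvent (A : Set S) : retEvent A ⊆ hitEvent A :=
  fun ω ⟨n, hn⟩ => ⟨n + 1, hn⟩

end Main

/-- sound and complete supermartingale certificate for absorbing
regions.  For disjoint measurable `A, J ⊆ S`, a measurable `V : S → [0,∞)` with
`PV ≤ V` off `A`, `V ≥ 1` on `A`, and `V ≤ 1 − γ` on `J` for some `γ > 0` exists if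
and only if `sup_{s ∈ J} P_{δ_s}(σ_A < ∞) < 1`. -/
theorem absorbing_region_certificate_iff
    {S : Type*} [MeasurableSpace S]
    (P : Kernel S S) [IsMarkovKernel P]
    (T : Kernel S (ℕ → S)) [IsMarkovKernel T] (hT : IsTrajKernel P T)
    (A J : Set S) (hA : MeasurableSet A) (hJ : MeasurableSet J)
    (hdisj : Disjoint A J) :
    (∃ V : S → ℝ, Measurable V ∧ (∀ s, 0 ≤ V s) ∧
      (∀ s ∉ A, ∫⁻ u, ENNReal.ofReal (V u) ∂(P s) ≤ ENNReal.ofReal (V s)) ∧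
      (∀ s ∈ A, 1 ≤ V s) ∧
      (∃ γ : ℝ, 0 < γ ∧ ∀ s ∈ J, V s ≤ 1 - γ)) ↔
    (⨆ s ∈ J, T s (retEvent A)) < 1 := by
  have hHitMeas : MeasurableSet (hitEvent A) := measurableSet_hitEvent hA
  have hRetMeas : MeasurableSet (retEvent A) := measurableSet_retEvent hA
  constructor
  · rintro ⟨V, hVmeas, hVpos, hVsuper, hVA, γ, hγ, hVJ⟩
    -- the supermartingale bounds each hApprox, hence the hitting probability
    set W : S → ℝ≥0∞ := fun s => ENNReal.ofReal (V s) with hW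
    have hbound : ∀ n s, hApprox P A n s ≤ W s := by
      intro n
      induction n with
      | zero =>
        intro s
        by_cases hs : s ∈ A
        · rw [hApprox_mem P hs]
          rw [hW]
          simpa using ENNReal.one_le_ofReal.mpr (hVA s hs)
        · rw [hApprox_not_mem_zero P hs]; exact zero_le
      | succ n ih =>
        intro s
        by_cases hs : s ∈ A
        · rw [hApprox_mem P hs, hW]
          simpa using ENNReal.one_le_ofReal.mpr (hVA s hs)
        · rw [hApprox_not_mem_succ P hs]
          calc ∫⁻ u, hApprox P A n u ∂(P s) ≤ ∫⁻ u, W u ∂(P s) :=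
                lintegral_mono fun u => ih u
            _ ≤ W s := hVsuper s hs
    have hkey : ∀ s ∈ J, T s (retEvent A) ≤ ENNReal.ofReal (1 - γ) := by
      intro s hs
      calc T s (retEvent A) ≤ T s (hitEvent A) :=
            measure_mono (retEvent_subset_hitEvent A)
        _ = ⨆ n, hApprox P A n s := T_hitEvent P T hT hA s
        _ ≤ W s := iSup_le fun n => hbound n s
        _ ≤ ENNReal.ofReal (1 - γ) := ENNReal.ofReal_le_ofReal (hVJ s hs)
    refine lt_of_le_of_lt (iSup₂_le hkey) ?_
    exact ENNReal.ofReal_lt_one.mpr (by linarith)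
  · intro hlt
    -- take V = hitting probability
    set c := ⨆ s ∈ J, T s (retEvent A) with hc
    refine ⟨fun s => (T s (hitEvent A)).toReal,
      (Kernel.measurable_coe T hHitMeas).ennreal_toReal,
      fun s => ENNReal.toReal_nonneg, ?_, ?_, ?_⟩
    · intro s _
      have h1 : ∀ u, ENNReal.ofReal ((T u (hitEvent A)).toReal) = T u (hitEvent A) :=
        fun u => ENNReal.ofReal_toReal (measure_ne_top _ _)
      calc ∫⁻ u, ENNReal.ofReal ((T u (hitEvent A)).toReal) ∂(P s)
          = ∫⁻ u, T u (hitEvent A) ∂(P s) := lintegral_congr fun u => h1 u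
        _ = T s (shift ⁻¹' hitEvent A) := (T_shift P T hT s hHitMeas).symm
        _ ≤ T s (hitEvent A) := measure_mono (retEvent_subset_hitEvent A)
        _ = ENNReal.ofReal ((T s (hitEvent A)).toReal) := (h1 s).symm
    · intro s hs
      have h1 : T s (hitEvent A) = 1 := by
        refine le_antisymm prob_le_one ?_
        calc (1 : ℝ≥0∞) = T s ((fun ω : ℕ → S => ω 0) ⁻¹' A) :=
              (T_coord0_mem P T hT hA hs).symm
          _ ≤ T s (hitEvent A) := measure_mono fun ω h => ⟨0, h⟩
      show (1:ℝ) ≤ (T s (hitEvent A)).toReal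
      rw [h1]; simp
    · refine ⟨1 - c.toReal, ?_, ?_⟩
      · have : c.toReal < 1 := by
          rw [← ENNReal.toReal_one]
          exact ENNReal.toReal_strict_mono one_ne_top hlt
        linarith
      · intro s hs
        show (T s (hitEvent A)).toReal ≤ 1 - (1 - c.toReal)
        have hsA : s ∉ A := fun h => Set.disjoint_left.mp hdisj h hs
        have heq : T s (hitEvent A) = T s (retEvent A) := by
          have hsplit : hitEvent A = retEvent A ∪ (fun ω : ℕ → S => ω 0) ⁻¹' A := by
            ext ω
            simp only [hitEvent, retEvent, Set.mem_setOf_eq, Set.mem_union, Set.mem_preimage]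
            constructor
            · rintro ⟨n, hn⟩
              cases n with
              | zero => exact Or.inr hn
              | succ n => exact Or.inl ⟨n, hn⟩
            · rintro (⟨n, hn⟩ | h)
              · exact ⟨n + 1, hn⟩
              · exact ⟨0, h⟩
          have hnull : T s ((fun ω : ℕ → S => ω 0) ⁻¹' A) = 0 :=
            T_coord0_not_mem P T hT hA hsA
          rw [hsplit]
          refine le_antisymm ?_ (measure_mono Set.subset_union_left)
          calc T s (retEvent A ∪ (fun ω : ℕ → S => ω 0) ⁻¹' A)
              ≤ T s (retEvent A) + T s ((fun ω : ℕ → S => ω 0) ⁻¹' A) := measure_union_le _ _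
            _ = T s (retEvent A) := by rw [hnull, add_zero]
        rw [heq]
        have hle : T s (retEvent A) ≤ c := le_iSup₂ (f := fun s _ => T s (retEvent A)) s hs
        have : (T s (retEvent A)).toReal ≤ c.toReal :=
          ENNReal.toReal_mono (hlt.trans_le le_top).ne hle
        linarith
end

section
/- Completeness of Proof Rule #1 for almost-sure reactivity: let S be a countable set with the discrete σ-algebra, P a Markov kernel on S, μ an initial probability measure on S, and (A₁,B₁),…,(A_k,B_k) subsets of S. Suppose P_μ(⋂_{i=1}^k (Fin(A_i) ∪ Inf(B_i))) = 1. Then there exist: a region I ⊆ S with a function V₀ : S → [0,∞); regions J₁,…,J_k with J_i ⊆ I \ A_i; functions V₁,W₁,…,V_k,W_k : S → [0,∞); and ranking functions U₁,…,U_k : S → ℕ, satisfying for every i = 1,…,k: (a) PV_i(s) ≤ V_i(s) for all s ∉ A_i; (b) V_i(s) ≥ 1 for all s ∈ A_i; (c) there exists γ_i > 0 with V_i(s) ≤ 1 − γ_i for all s ∈ J_i; (d) PW_i(s) ≤ W_i(s) for all s ∈ I \ (B_i ∪ J_i); (e) W_i(s) > 0 for all s ∈ I \ (B_i ∪ J_i);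 (f) W_i(s) = 0 and U_i(s) = 0 for all s ∈ I ∩ (B_i ∪ J_i); (g) for every r ≥ 0 there exists ε_r > 0 such that for all s ∈ I \ (B_i ∪ J_i) with W_i(s) ≤ r, P(s, {s' : U_i(s') < U_i(s)}) ≥ ε_r; (h) for every r ≥ 0, the image U_i[{s ∈ I : W_i(s) ≤ r}] is a bounded subset of ℕ; together with (i) PV₀(s) ≤ V₀(s) for all s ∈ I, (j) V₀(s) ≥ 1 for all s ∉ I, and (k) μV₀ = 0. -/
set_option linter.unusedSectionVars false
set_option maxHeartbeats 1000000

open MeasureTheory ProbabilityTheory Filter Set ENNReal Topology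

namespace PRC

variable {S : Type*} [MeasurableSpace S] [DiscreteMeasurableSpace S] [Countable S]

/-- reach event -/
def reachE (A : Set S) : Set (ℕ → S) := {ω | ∃ n, ω n ∈ A}

/-- reach within n steps -/
def RE (C : Set S) (n : ℕ) : Set (ℕ → S) := {ω | ∃ m ≤ n, ω m ∈ C}

@[simp] lemma consTraj_zero (s : S) (ω : ℕ → S) : consTraj s ω 0 = s := rfl
@[simp] lemma consTraj_succ (s : S) (ω : ℕ → S) (n : ℕ) : consTraj s ω (n + 1) = ω n := rfl

@[simp] lemma shift_consTraj (s : S) (ω : ℕ → S) : shift (consTraj s ω) = ω := rfl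

lemma measurable_consTraj (s : S) : Measurable (consTraj s : (ℕ → S) → (ℕ → S)) := by
  rw [measurable_pi_iff]
  intro n
  cases n with
  | zero => exact measurable_const
  | succ n => exact measurable_pi_apply n

lemma measurable_shift : Measurable (shift : (ℕ → S) → (ℕ → S)) := by
  rw [measurable_pi_iff]; intro n; exact measurable_pi_apply (n + 1)

lemma meas_coord (n : ℕ) (A : Set S) : MeasurableSet {ω : ℕ → S | ω n ∈ A} :=
  measurable_pi_apply n MeasurableSet.of_discrete

lemma meas_reachE (A : Set S) : MeasurableSet (reachE A) := by
  have : reachE A = ⋃ n, {ω : ℕ → S | ω n ∈ A} := by ext ω; simp [reachE]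
  rw [this]; exact MeasurableSet.iUnion fun n => meas_coord n A

lemma meas_RE (C : Set S) (n : ℕ) : MeasurableSet (RE C n) := by
  have : RE C n = ⋃ m, ⋃ (_ : m ≤ n), {ω : ℕ → S | ω m ∈ C} := by ext ω; simp [RE]
  rw [this]; exact MeasurableSet.iUnion fun m => MeasurableSet.iUnion fun _ => meas_coord m C

lemma meas_invEvent (I : Set S) : MeasurableSet (invEvent I) := by
  have : invEvent I = ⋂ n, {ω : ℕ → S | ω n ∈ I} := by ext ω; simp [invEvent]
  rw [this]; exact MeasurableSet.iInter fun n => meas_coord n I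

lemma meas_finVisits (A : Set S) : MeasurableSet (finVisits A) := by
  have : finVisits A = ⋃ n, ⋂ m, ⋂ (_ : n ≤ m), {ω : ℕ → S | ω m ∈ Aᶜ} := by
    ext ω; simp [finVisits]
  rw [this]
  exact MeasurableSet.iUnion fun n => MeasurableSet.iInter fun m =>
    MeasurableSet.iInter fun _ => meas_coord m Aᶜ

lemma meas_infVisits (B : Set S) : MeasurableSet (infVisits B) := by
  have : infVisits B = ⋂ n, ⋃ m, ⋃ (_ : n ≤ m), {ω : ℕ → S | ω m ∈ B} := by
    ext ω; simp [infVisits]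
  rw [this]
  exact MeasurableSet.iInter fun n => MeasurableSet.iUnion fun m =>
    MeasurableSet.iUnion fun _ => meas_coord m B

/-! pullback identities -/

lemma pre_coord_succ (s : S) (n : ℕ) (A : Set S) :
    consTraj s ⁻¹' {ω : ℕ → S | ω (n + 1) ∈ A} = {ω : ℕ → S | ω n ∈ A} := by
  ext ω; simp

lemma pre_coord_zero_mem (s : S) {A : Set S} (hs : s ∈ A) :
    consTraj s ⁻¹' {ω : ℕ → S | ω 0 ∈ A} = univ := by
  ext ω; simp [hs]

lemma pre_coord_zero_not (s : S) {A : Set S} (hs : s ∉ A) :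
    consTraj s ⁻¹' {ω : ℕ → S | ω 0 ∈ A} = ∅ := by
  ext ω; simp [hs]

lemma pre_reachE_mem (s : S) {A : Set S} (hs : s ∈ A) :
    consTraj s ⁻¹' reachE A = univ := by
  ext ω; simp only [mem_preimage, mem_univ, iff_true, reachE, mem_setOf_eq]
  exact ⟨0, hs⟩

lemma pre_reachE_not (s : S) {A : Set S} (hs : s ∉ A) :
    consTraj s ⁻¹' reachE A = reachE A := by
  ext ω
  simp only [mem_preimage, reachE, mem_setOf_eq]
  constructor
  · rintro ⟨n, hn⟩
    cases n with
    | zero => exact absurd hn hs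
    | succ n => exact ⟨n, hn⟩
  · rintro ⟨n, hn⟩; exact ⟨n + 1, hn⟩

lemma pre_RE_succ (s : S) {C : Set S} (hs : s ∉ C) (n : ℕ) :
    consTraj s ⁻¹' RE C (n + 1) = RE C n := by
  ext ω
  simp only [mem_preimage, RE, mem_setOf_eq]
  constructor
  · rintro ⟨m, hm, hmem⟩
    cases m with
    | zero => exact absurd hmem hs
    | succ m => exact ⟨m, Nat.succ_le_succ_iff.mp hm, hmem⟩
  · rintro ⟨m, hm, hmem⟩; exact ⟨m + 1, Nat.succ_le_succ hm, hmem⟩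

lemma RE_zero (C : Set S) : RE C 0 = {ω : ℕ → S | ω 0 ∈ C} := by
  ext ω
  simp only [RE, mem_setOf_eq]
  constructor
  · rintro ⟨m, hm, hmem⟩; rwa [Nat.le_zero.mp hm] at hmem
  · intro h; exact ⟨0, le_refl 0, h⟩

lemma RE_mono (C : Set S) : Monotone (RE C) := by
  intro n n' h ω
  rintro ⟨m, hm, hmem⟩; exact ⟨m, hm.trans h, hmem⟩

lemma reachE_eq_iUnion (C : Set S) : reachE C = ⋃ n, RE C n := by
  ext ω
  simp only [reachE, mem_setOf_eq, mem_iUnion, RE]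
  constructor
  · rintro ⟨n, h⟩; exact ⟨n, n, le_refl n, h⟩
  · rintro ⟨n, m, _, h⟩; exact ⟨m, h⟩

lemma pre_invEvent_mem (s : S) {K : Set S} (hs : s ∈ K) :
    consTraj s ⁻¹' invEvent K = invEvent K := by
  ext ω
  simp only [mem_preimage, invEvent, mem_setOf_eq]
  constructor
  · intro h n; exact h (n + 1)
  · intro h n; cases n with
    | zero => exact hs
    | succ n => exact h n

lemma pre_invEvent_not (s : S) {K : Set S} (hs : s ∉ K) :
    consTraj s ⁻¹' invEvent K = ∅ := by
  ext ω
  simp only [mem_preimage, invEvent, mem_setOf_eq, mem_empty_iff_false, iff_false]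
  intro h; exact hs (h 0)

lemma pre_shift (s : S) (E : Set (ℕ → S)) :
    consTraj s ⁻¹' (shift ⁻¹' E) = E := by
  ext ω; simp

lemma pre_finVisits (s : S) (A : Set S) :
    consTraj s ⁻¹' finVisits A = finVisits A := by
  ext ω
  simp only [mem_preimage, finVisits, mem_setOf_eq]
  constructor
  · rintro ⟨n, hn⟩
    exact ⟨n, fun m hm => hn (m + 1) (le_trans hm (Nat.le_succ m))⟩
  · rintro ⟨n, hn⟩
    refine ⟨n + 1, fun m hm => ?_⟩
    cases m with
    | zero => omega
    | succ m => exact hn m (Nat.succ_le_succ_iff.mp hm)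

lemma pre_infVisits (s : S) (B : Set S) :
    consTraj s ⁻¹' infVisits B = infVisits B := by
  ext ω
  simp only [mem_preimage, infVisits, mem_setOf_eq]
  constructor
  · intro h n
    obtain ⟨m, hm, hmem⟩ := h (n + 1)
    cases m with
    | zero => omega
    | succ m => exact ⟨m, by omega, hmem⟩
  · intro h n
    obtain ⟨m, hm, hmem⟩ := h n
    exact ⟨m + 1, by omega, hmem⟩

lemma shift_iterate (L : ℕ) (ω : ℕ → S) (j : ℕ) : (shift^[L]) ω j = ω (j + L) := by
  induction L generalizing ω j with
  | zero => rfl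
  | succ L ih =>
    rw [Function.iterate_succ_apply]
    rw [ih (shift ω) j]
    simp [shift]; ring_nf



variable (P : Kernel S S) [IsMarkovKernel P] (T : Kernel S (ℕ → S)) [IsMarkovKernel T]

lemma T_apply (hT : IsTrajKernel P T) (s : S) {E : Set (ℕ → S)} (hE : MeasurableSet E) :
    T s E = ∫⁻ u, T u (consTraj s ⁻¹' E) ∂(P s) := by
  rw [hT s, Measure.map_apply (measurable_consTraj s) hE,
    Measure.bind_apply ((measurable_consTraj s) hE) (Kernel.measurable T).aemeasurable]

lemma T_coord_zero_mem (hT : IsTrajKernel P T) {s : S} {A : Set S} (hs : s ∈ A) :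
    T s {ω | ω 0 ∈ A} = 1 := by
  rw [T_apply P T hT s (meas_coord 0 A), pre_coord_zero_mem s hs]; simp

lemma T_coord_zero_not (hT : IsTrajKernel P T) {s : S} {A : Set S} (hs : s ∉ A) :
    T s {ω | ω 0 ∈ A} = 0 := by
  rw [T_apply P T hT s (meas_coord 0 A), pre_coord_zero_not s hs]; simp

lemma T_reach_one (hT : IsTrajKernel P T) {s : S} {A : Set S} (hs : s ∈ A) :
    T s (reachE A) = 1 := by
  rw [T_apply P T hT s (meas_reachE A), pre_reachE_mem s hs]; simp

lemma T_reach_rec (hT : IsTrajKernel P T) {s : S} {A : Set S} (hs : s ∉ A) :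
    T s (reachE A) = ∫⁻ u, T u (reachE A) ∂(P s) := by
  rw [T_apply P T hT s (meas_reachE A), pre_reachE_not s hs]

lemma T_RE_succ (hT : IsTrajKernel P T) {s : S} {C : Set S} (hs : s ∉ C) (n : ℕ) :
    T s (RE C (n + 1)) = ∫⁻ u, T u (RE C n) ∂(P s) := by
  rw [T_apply P T hT s (meas_RE C (n + 1)), pre_RE_succ s hs n]

lemma T_REc_succ (hT : IsTrajKernel P T) {s : S} {C : Set S} (hs : s ∉ C) (n : ℕ) :
    T s ((RE C (n + 1))ᶜ) = ∫⁻ u, T u ((RE C n)ᶜ) ∂(P s) := by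
  rw [T_apply P T hT s (meas_RE C (n + 1)).compl]
  refine lintegral_congr fun u => ?_
  rw [Set.preimage_compl, pre_RE_succ s hs n]

lemma T_RE_zero_mem (hT : IsTrajKernel P T) {s : S} {C : Set S} (hs : s ∈ C) :
    T s (RE C 0) = 1 := by rw [RE_zero]; exact T_coord_zero_mem P T hT hs

lemma T_RE_zero_not (hT : IsTrajKernel P T) {s : S} {C : Set S} (hs : s ∉ C) :
    T s (RE C 0) = 0 := by rw [RE_zero]; exact T_coord_zero_not P T hT hs

lemma T_shift_null (hT : IsTrajKernel P T) {E : Set (ℕ → S)} (hE : MeasurableSet E)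
    (hz : ∀ u, T u E = 0) : ∀ (L : ℕ) (s : S), T s ((shift^[L]) ⁻¹' E) = 0 := by
  intro L
  induction L with
  | zero => simpa using hz
  | succ L ih =>
    intro s
    have hpre : (shift^[L + 1]) ⁻¹' E = shift ⁻¹' ((shift^[L]) ⁻¹' E) := by
      rw [Function.iterate_succ]; rfl
    have hmE : MeasurableSet ((shift^[L]) ⁻¹' E) := (measurable_shift.iterate L) hE
    rw [hpre, T_apply P T hT s (measurable_shift hmE)]
    have : ∀ u : S, T u (consTraj s ⁻¹' (shift ⁻¹' ((shift^[L]) ⁻¹' E))) = 0 := by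
      intro u; rw [pre_shift]; exact ih u
    simp only [this]; simp

-- the harmonic-invariance lemma
lemma P_notI_null (hT : IsTrajKernel P T) {G : Set (ℕ → S)} (hG : MeasurableSet G)
    (hpre : ∀ s : S, consTraj s ⁻¹' G = G) {s : S} (hs : T s G = 1) :
    P s {u | T u G ≠ 1} = 0 := by
  have harm : T s G = ∫⁻ u, T u G ∂(P s) := by
    rw [T_apply P T hT s hG]
    exact lintegral_congr fun u => by rw [hpre s]
  have h0 : ∫⁻ u, (1 - T u G) ∂(P s) = 0 := by
    rw [lintegral_sub (measurable_of_countable _) (by simp [← harm, hs])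
      (Filter.Eventually.of_forall fun u => prob_le_one)]
    simp [← harm, hs]
  have hae := (lintegral_eq_zero_iff (measurable_of_countable _)).mp h0
  have hae' : ∀ᵐ u ∂(P s), 1 ≤ T u G := by
    filter_upwards [hae] with u hu
    rw [Pi.zero_apply] at hu
    exact tsub_eq_zero_iff_le.mp hu
  rw [ae_iff] at hae'
  refine measure_mono_null ?_ hae'
  intro u hu
  simp only [mem_setOf_eq] at *
  intro h1
  exact hu (le_antisymm prob_le_one h1)

lemma T_stay_null (hT : IsTrajKernel P T) {G : Set (ℕ → S)} (hG : MeasurableSet G)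
    (hpre : ∀ s : S, consTraj s ⁻¹' G = G) {s : S} (hs : T s G = 1) :
    T s (reachE {u | T u G ≠ 1}) = 0 := by
  set Ic : Set S := {u | T u G ≠ 1} with hIc
  have key : ∀ (n : ℕ) (s : S), T s G = 1 → T s {ω | ω n ∈ Ic} = 0 := by
    intro n
    induction n with
    | zero =>
      intro s hs
      exact T_coord_zero_not P T hT (by simp [hIc, hs])
    | succ n ih =>
      intro s hs
      rw [T_apply P T hT s (meas_coord (n+1) Ic), pre_coord_succ s n Ic]
      rw [lintegral_eq_zero_iff (measurable_of_countable _)]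
      have hnull := P_notI_null P T hT hG hpre hs
      rw [Filter.EventuallyEq, Filter.eventually_iff, mem_ae_iff]
      refine measure_mono_null ?_ hnull
      intro u hu
      simp only [mem_compl_iff, mem_setOf_eq] at *
      intro h1
      exact hu (ih u h1)
  have : reachE Ic = ⋃ n, {ω : ℕ → S | ω n ∈ Ic} := by ext ω; simp [reachE]
  rw [this]
  exact measure_iUnion_null fun n => key n s hs


variable (P : Kernel S S) [IsMarkovKernel P] (T : Kernel S (ℕ → S)) [IsMarkovKernel T]
lemma T_inv_K_null (hT : IsTrajKernel P T) (A : Set S) :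
    ∀ u : S, T u (invEvent {v : S | v ∉ A ∧ 2⁻¹ < T v (reachE A)}) = 0 := by
  set K : Set S := {v : S | v ∉ A ∧ 2⁻¹ < T v (reachE A)} with hK
  set β := ⨆ u : S, T u (invEvent K) with hβ
  have hβ1 : β ≤ 1 := iSup_le fun u => prob_le_one
  have hnotK : ∀ u ∉ K, T u (invEvent K) = 0 := by
    intro u hu
    refine measure_mono_null (fun ω hω => ?_) (T_coord_zero_not P T hT hu)
    exact hω 0
  have claim1 : ∀ (N : ℕ) (u : S), T u (invEvent K) ≤ β * T u ((RE A N)ᶜ) := by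
    intro N
    induction N with
    | zero =>
      intro u
      by_cases hu : u ∈ K
      · have h1 : T u ((RE A 0)ᶜ) = 1 := by
          rw [RE_zero]
          have he : ({ω  : ℕ → S| ω 0 ∈ A})ᶜ = {ω : ℕ → S | ω 0 ∈ Aᶜ} := by ext; simp
          rw [he]
          exact T_coord_zero_mem P T hT hu.1
        rw [h1, mul_one]
        exact le_iSup (fun u => T u (invEvent K)) u
      · rw [hnotK u hu]; exact zero_le
    | succ N ih =>
      intro u
      by_cases hu : u ∈ K
      · have hrec : T u (invEvent K) = ∫⁻ v, T v (invEvent K) ∂(P u) := by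
          rw [T_apply P T hT u (meas_invEvent K)]
          exact lintegral_congr fun v => by rw [pre_invEvent_mem u hu]
        rw [hrec, T_REc_succ P T hT hu.1 N]
        calc ∫⁻ v, T v (invEvent K) ∂(P u)
            ≤ ∫⁻ v, β * T v ((RE A N)ᶜ) ∂(P u) := lintegral_mono ih
          _ = β * ∫⁻ v, T v ((RE A N)ᶜ) ∂(P u) :=
              lintegral_const_mul β (measurable_of_countable _)
      · rw [hnotK u hu]; exact zero_le
  have claim2 : ∀ u : S, T u (invEvent K) ≤ β * 2⁻¹ := by
    intro u
    by_cases hu : u ∈ K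
    · obtain ⟨N, hN⟩ : ∃ N, 2⁻¹ < T u (RE A N) := by
        have hd := ((RE_mono A).directed_le : Directed (· ⊆ ·) (RE A))
        have heq := hd.measure_iUnion (μ := T u)
        have h2 : 2⁻¹ < ⨆ N, T u (RE A N) := by
          rw [← heq, ← reachE_eq_iUnion]; exact hu.2
        exact lt_iSup_iff.mp h2
      have ht : T u ((RE A N)ᶜ) ≤ 2⁻¹ := by
        rw [measure_compl (meas_RE A N) (measure_ne_top _ _), measure_univ]
        calc 1 - T u (RE A N) ≤ 1 - 2⁻¹ := tsub_le_tsub_left hN.le 1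
          _ = 2⁻¹ := ENNReal.sub_eq_of_eq_add (by simp) ENNReal.inv_two_add_inv_two.symm
      calc T u (invEvent K) ≤ β * T u ((RE A N)ᶜ) := claim1 N u
        _ ≤ β * 2⁻¹ := mul_le_mul_right ht β
    · rw [hnotK u hu]; exact zero_le
  have hβ0 : β = 0 := by
    by_contra h
    have hle : β ≤ β * 2⁻¹ := iSup_le claim2
    have : β * 2⁻¹ < β := by
      have := ENNReal.half_lt_self h (lt_of_le_of_lt hβ1 one_lt_top).ne
      rwa [div_eq_mul_inv] at this  -- maybe div_eq_mul_inv generic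
    exact absurd (lt_of_le_of_lt hle this) (lt_irrefl β)
  intro u
  exact le_antisymm (hβ0 ▸ le_iSup (fun u => T u (invEvent K)) u) zero_le


variable (P : Kernel S S) [IsMarkovKernel P] (T : Kernel S (ℕ → S)) [IsMarkovKernel T]
lemma one_sub_inv_two : (1 : ℝ≥0∞) - 2⁻¹ = 2⁻¹ :=
  ENNReal.sub_eq_of_eq_add (by simp) ENNReal.inv_two_add_inv_two.symm

lemma ofReal_half : ENNReal.ofReal (2⁻¹ : ℝ) = 2⁻¹ := by
  rw [ENNReal.ofReal_inv_of_pos (by norm_num)]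
  norm_num


lemma exists_WU (hT : IsTrajKernel P T) (C I : Set S)
    (hIC : ∀ s ∈ I, T s (reachE C) = 1) :
    ∃ (W : S → ℝ) (U : S → ℕ),
      (∀ s, 0 ≤ W s) ∧
      (∀ s ∈ I, s ∉ C → ∫⁻ u, ENNReal.ofReal (W u) ∂(P s) ≤ ENNReal.ofReal (W s)) ∧
      (∀ s ∈ I, s ∉ C → 0 < W s) ∧
      (∀ s ∈ C, W s = 0) ∧ (∀ s ∈ C, U s = 0) ∧
      (∀ r : ℝ, 0 ≤ r → ∃ δ : ℝ≥0∞, 0 < δ ∧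
        ∀ s ∈ I, s ∉ C → W s ≤ r → δ ≤ P s {u | U u < U s}) ∧
      (∀ r : ℝ, 0 ≤ r → ∃ N : ℕ, ∀ s ∈ I, W s ≤ r → U s ≤ N) := by
  classical
  rcases isEmpty_or_nonempty S with hS | hS
  · refine ⟨fun _ => 0, fun _ => 0, fun s => (hS.false s).elim, fun s => (hS.false s).elim,
      fun s => (hS.false s).elim, fun s => (hS.false s).elim, fun s => (hS.false s).elim,
      fun r _ => ⟨1, one_pos, fun s => (hS.false s).elim⟩,
      fun r _ => ⟨0, fun s => (hS.false s).elim⟩⟩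
  obtain ⟨e, he⟩ := exists_surjective_nat S
  -- tail probabilities
  set t : ℕ → S → ℝ≥0∞ := fun n s => T s ((RE C n)ᶜ) with ht_def
  have htend : ∀ s ∈ I, Tendsto (fun n => t n s) atTop (𝓝 0) := by
    intro s hs
    have hiInter : ⋂ n, (RE C n)ᶜ = (reachE C)ᶜ := by
      rw [reachE_eq_iUnion, compl_iUnion]
    have h0 : T s ((reachE C)ᶜ) = 0 := by
      rw [measure_compl (meas_reachE C) (measure_ne_top _ _), hIC s hs, measure_univ, tsub_self]
    have htd := tendsto_measure_iInter_atTop (μ := T s)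
      (fun n => (meas_RE C n).compl.nullMeasurableSet)
      (fun m n h => compl_subset_compl.mpr (RE_mono C h)) ⟨0, measure_ne_top _ _⟩
    rw [hiInter, h0] at htd
    exact htd
  -- diagonal sequence
  have hQex : ∀ m : ℕ, ∃ N : ℕ, ∀ j ≤ m, e j ∈ I → t N (e j) ≤ (2⁻¹ : ℝ≥0∞) ^ m := by
    intro m
    have hj : ∀ j : ℕ, ∃ Nj, ∀ n ≥ Nj, e j ∈ I → t n (e j) ≤ (2⁻¹ : ℝ≥0∞) ^ m := by
      intro j
      by_cases hje : e j ∈ I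
      · have hpos : (0 : ℝ≥0∞) < 2⁻¹ ^ m := ENNReal.pow_pos (by simp) m
        have hev := (htend _ hje).eventually_lt_const hpos
        obtain ⟨Nj, hNj⟩ := eventually_atTop.mp hev
        exact ⟨Nj, fun n hn _ => (hNj n hn).le⟩
      · exact ⟨0, fun n _ h => absurd h hje⟩
    choose Nf hNf using hj
    refine ⟨(Finset.range (m + 1)).sup Nf, fun j hjm hje => ?_⟩
    exact hNf j _ (Finset.le_sup (Finset.mem_range.mpr (Nat.lt_succ_of_le hjm))) hje
  set nseq : ℕ → ℕ := fun m => Nat.find (hQex m) with hnseq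
  have hnspec : ∀ m, ∀ j ≤ m, e j ∈ I → t (nseq m) (e j) ≤ (2⁻¹ : ℝ≥0∞) ^ m :=
    fun m => Nat.find_spec (hQex m)
  have hnmono : Monotone nseq := by
    intro m m' hmm'
    refine Nat.find_mono fun N hQN => ?_
    intro j hjm hje
    exact (hQN j (hjm.trans hmm') hje).trans (pow_le_pow_right_of_le_one' (by simp) hmm')
  -- the supermartingale
  set WE : S → ℝ≥0∞ := fun s => 1 + ∑' m, t (nseq m) s with hWE_def
  have hWE1 : ∀ s, 1 ≤ WE s := fun s => le_self_add
  have hWfin : ∀ s ∈ I, WE s ≠ ∞ := by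
    intro s hsI
    obtain ⟨j, hej⟩ := he s
    have hb : ∀ m, t (nseq m) s ≤ (if m < j then (1 : ℝ≥0∞) else 0) + (2⁻¹ : ℝ≥0∞) ^ m := by
      intro m
      by_cases hm : m < j
      · simp only [hm, if_true]
        exact le_add_right prob_le_one
      · have hjm : j ≤ m := not_lt.mp hm
        have h2 := hnspec m j hjm (by rw [hej]; exact hsI)
        rw [hej] at h2
        simp only [hm, if_false, zero_add]
        exact h2
    have hsum : ∑' m, t (nseq m) s ≤ (j : ℝ≥0∞) + 2 := by
      calc ∑' m, t (nseq m) s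
          ≤ ∑' m, ((if m < j then (1 : ℝ≥0∞) else 0) + (2⁻¹ : ℝ≥0∞) ^ m) :=
            ENNReal.tsum_le_tsum hb
        _ = (∑' m, (if m < j then (1 : ℝ≥0∞) else 0)) + ∑' m, (2⁻¹ : ℝ≥0∞) ^ m :=
            ENNReal.tsum_add
        _ ≤ (j : ℝ≥0∞) + 2 := by
            refine add_le_add ?_ ?_
            · rw [tsum_eq_sum (s := Finset.range j)
                (fun m hm => if_neg (by simpa using hm))]
              calc ∑ m ∈ Finset.range j, (if m < j then (1 : ℝ≥0∞) else 0)
                  ≤ ∑ m ∈ Finset.range j, 1 :=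
                    Finset.sum_le_sum fun m _ => by split <;> simp
                _ = (j : ℝ≥0∞) := by simp
            · rw [ENNReal.tsum_geometric, one_sub_inv_two, inv_inv]
    have : WE s ≤ 1 + ((j : ℝ≥0∞) + 2) := add_le_add_right hsum 1
    exact ne_top_of_le_ne_top (by simp [ENNReal.add_eq_top]) this
  have hsuper : ∀ s ∉ C, ∫⁻ u, WE u ∂(P s) ≤ WE s := by
    intro s hsC
    have hmeas : ∀ m : ℕ, AEMeasurable (fun u => t (nseq m) u) (P s) :=
      fun m => (measurable_of_countable _).aemeasurable
    have h1 : ∫⁻ u, WE u ∂(P s) = ∫⁻ u, ((1:ℝ≥0∞) + ∑' m, t (nseq m) u) ∂(P s) := rfl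
    rw [h1, lintegral_add_left measurable_const, lintegral_const, measure_univ, mul_one,
      lintegral_tsum hmeas]
    refine add_le_add_right (ENNReal.tsum_le_tsum fun m => ?_) 1
    rw [← T_REc_succ P T hT hsC (nseq m)]
    exact measure_mono (compl_subset_compl.mpr (RE_mono C (Nat.le_succ _)))
  -- ranking thresholds
  set aR : ℕ → ℝ := fun n => 2⁻¹ - (2⁻¹ : ℝ) ^ (n + 2) with haR_def
  have haR_nonneg : ∀ n, 0 ≤ aR n := by
    intro n
    have : (2⁻¹ : ℝ) ^ (n + 2) ≤ (2⁻¹ : ℝ) ^ 1 :=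
      pow_le_pow_of_le_one (by norm_num) (by norm_num) (by omega)
    simp only [haR_def]
    simp only [pow_one] at this
    linarith
  have haR_pos : ∀ n, 0 < aR n := by
    intro n
    have : (2⁻¹ : ℝ) ^ (n + 2) ≤ (2⁻¹ : ℝ) ^ 2 :=
      pow_le_pow_of_le_one (by norm_num) (by norm_num) (by omega)
    simp only [haR_def]
    nlinarith
  have haR_le : ∀ n, aR n ≤ 2⁻¹ := by
    intro n
    have : (0:ℝ) < (2⁻¹ : ℝ) ^ (n + 2) := by positivity
    simp only [haR_def]; linarith
  set a : ℕ → ℝ≥0∞ := fun n => ENNReal.ofReal (aR n) with ha_def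
  have ha_half : ∀ n, a n ≤ 2⁻¹ := by
    intro n
    rw [ha_def, ← ofReal_half]
    exact ENNReal.ofReal_le_ofReal (haR_le n)
  have ha_pos : ∀ n, 0 < a n := fun n => ENNReal.ofReal_pos.mpr (haR_pos n)
  -- ranking function
  set U : S → ℕ := fun s => if hx : ∃ n, a n ≤ T s (RE C n) then Nat.find hx else 0
    with hU_def
  have hUfind : ∀ s, ∀ hx : ∃ n, a n ≤ T s (RE C n), U s = Nat.find hx := by
    intro s hx
    simp only [hU_def]
    rw [dif_pos hx]
  have hUC : ∀ s ∈ C, U s = 0 := by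
    intro s hsC
    have hx : ∃ n, a n ≤ T s (RE C n) :=
      ⟨0, by rw [T_RE_zero_mem P T hT hsC]; exact (ha_half 0).trans (by simp)⟩
    rw [hUfind s hx]
    rw [Nat.find_eq_zero]
    rw [T_RE_zero_mem P T hT hsC]
    exact (ha_half 0).trans (by simp)
  -- decrease step
  have hUstep : ∀ s ∉ C, ∀ hx : ∃ n, a n ≤ T s (RE C n),
      ENNReal.ofReal ((2⁻¹ : ℝ) ^ (Nat.find hx + 2)) ≤ P s {u | U u < Nat.find hx} := by
    intro s hsC hx
    have hn0 : Nat.find hx ≠ 0 := by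
      intro h0
      have := Nat.find_spec hx
      rw [h0, T_RE_zero_not P T hT hsC] at this
      exact absurd this (by simpa using (ha_pos 0).ne'
      )
    obtain ⟨m, hm⟩ : ∃ m, Nat.find hx = m + 1 := ⟨Nat.find hx - 1, by omega⟩
    set E : Set S := {u | U u < m + 1} with hE_def
    have hq : a (m + 1) ≤ T s (RE C (m + 1)) := by
      have := Nat.find_spec hx
      rwa [hm] at this
    have hpw : ∀ u, T u (RE C m) ≤ E.indicator (1 : S → ℝ≥0∞) u + a m := by
      intro u
      by_cases ha : a m ≤ T u (RE C m)
      · have hxu : ∃ n, a n ≤ T u (RE C n) := ⟨m, ha⟩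
        have hUu : U u ≤ m := by
          rw [hUfind u hxu]
          exact Nat.find_min' hxu ha
        have hmem : u ∈ E := Nat.lt_succ_of_le hUu
        rw [indicator_of_mem hmem]
        simp only [Pi.one_apply]
        exact le_add_right prob_le_one
      · push_neg at ha
        exact ha.le.trans le_add_self
    have hstep : a (m + 1) ≤ P s E + a m := by
      calc a (m + 1) ≤ T s (RE C (m + 1)) := hq
        _ = ∫⁻ u, T u (RE C m) ∂(P s) := T_RE_succ P T hT hsC m
        _ ≤ ∫⁻ u, (E.indicator (1 : S → ℝ≥0∞) u + a m) ∂(P s) := lintegral_mono hpw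
        _ = P s E + a m := by
            rw [lintegral_add_right _ measurable_const,
              lintegral_indicator_one MeasurableSet.of_discrete, lintegral_const,
              measure_univ, mul_one]
    have hdiff : a (m + 1) - a m = ENNReal.ofReal ((2⁻¹ : ℝ) ^ (m + 3)) := by
      rw [ha_def]
      rw [← ENNReal.ofReal_sub _ (haR_nonneg m)]
      congr 1
      simp only [haR_def]
      ring
    rw [hm]
    have h312 : m + 1 + 2 = m + 3 := by omega
    rw [h312, ← hdiff, ← hE_def]
    exact tsub_le_iff_right.mpr hstep
  -- the key quantitative bound
  have hKey : ∀ r : ℝ, 0 ≤ r → ∃ N : ℕ, ∀ s ∈ I, s ∉ C → (WE s).toReal ≤ r →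
      a N ≤ T s (RE C N) ∧ U s ≤ N := by
    intro r hr
    set M : ℕ := ⌈2 * r⌉₊ with hM_def
    refine ⟨nseq M, fun s hsI hsC hWle => ?_⟩
    have hfin := hWfin s hsI
    have hWEle : WE s ≤ ENNReal.ofReal r := by
      rw [← ENNReal.ofReal_toReal hfin]
      exact ENNReal.ofReal_le_ofReal hWle
    have hsum : ∑' m, t (nseq m) s ≤ ENNReal.ofReal r := le_trans le_add_self hWEle
    have hfin2 : ((M : ℝ≥0∞) + 1) * t (nseq M) s ≤ ENNReal.ofReal r := by
      calc ((M : ℝ≥0∞) + 1) * t (nseq M) s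
          = ∑ m ∈ Finset.range (M + 1), t (nseq M) s := by
            rw [Finset.sum_const, Finset.card_range, nsmul_eq_mul]
            push_cast
            ring
        _ ≤ ∑ m ∈ Finset.range (M + 1), t (nseq m) s := by
            refine Finset.sum_le_sum fun m hm => ?_
            exact measure_mono (compl_subset_compl.mpr
              (RE_mono C (hnmono (Nat.lt_succ_iff.mp (Finset.mem_range.mp hm)))))
        _ ≤ ∑' m, t (nseq m) s := ENNReal.sum_le_tsum _
        _ ≤ ENNReal.ofReal r := hsum
    have hr2 : ENNReal.ofReal r ≤ ((M : ℝ≥0∞) + 1) * 2⁻¹ := by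
      have hMr : 2 * r ≤ (M : ℝ) := Nat.le_ceil (2 * r)
      have h1 : r ≤ ((M : ℝ) + 1) * 2⁻¹ := by linarith
      calc ENNReal.ofReal r ≤ ENNReal.ofReal (((M : ℝ) + 1) * 2⁻¹) :=
            ENNReal.ofReal_le_ofReal h1
        _ = ENNReal.ofReal ((M : ℝ) + 1) * ENNReal.ofReal (2⁻¹ : ℝ) :=
            ENNReal.ofReal_mul (by positivity)
        _ = ((M : ℝ≥0∞) + 1) * 2⁻¹ := by
            rw [ofReal_half, ENNReal.ofReal_add (by positivity) zero_le_one]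
            rw [ENNReal.ofReal_natCast, ENNReal.ofReal_one]
    have hMne : ((M : ℝ≥0∞) + 1) ≠ 0 := by simp
    have hMtop : ((M : ℝ≥0∞) + 1) ≠ ∞ := by simp [ENNReal.add_eq_top]
    have ht2 : t (nseq M) s ≤ 2⁻¹ :=
      (ENNReal.mul_le_mul_iff_right hMne hMtop).mp (hfin2.trans hr2)
    have hq2 : 2⁻¹ ≤ T s (RE C (nseq M)) := by
      have hcompl := measure_add_measure_compl (μ := T s) (meas_RE C (nseq M))
      rw [measure_univ] at hcompl
      have h1 : (1 : ℝ≥0∞) ≤ T s (RE C (nseq M)) + 2⁻¹ := by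
        rw [← hcompl]
        exact add_le_add_right ht2 _
      have := tsub_le_iff_right.mpr h1
      rwa [one_sub_inv_two] at this
    have haN : a (nseq M) ≤ T s (RE C (nseq M)) := (ha_half _).trans hq2
    refine ⟨haN, ?_⟩
    have hx : ∃ n, a n ≤ T s (RE C n) := ⟨nseq M, haN⟩
    rw [hUfind s hx]
    exact Nat.find_min' hx haN
  -- assemble
  refine ⟨fun s => if s ∈ C then 0 else (WE s).toReal, U, ?_, ?_, ?_, ?_, ?_, ?_, ?_⟩
  · intro s
    by_cases h : s ∈ C <;> simp [h, ENNReal.toReal_nonneg]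
  · intro s hsI hsC
    have hb : ∀ u, ENNReal.ofReal (if u ∈ C then (0:ℝ) else (WE u).toReal) ≤ WE u := by
      intro u
      split
      · simp
      · exact ENNReal.ofReal_toReal_le
    calc ∫⁻ u, ENNReal.ofReal (if u ∈ C then (0:ℝ) else (WE u).toReal) ∂(P s)
        ≤ ∫⁻ u, WE u ∂(P s) := lintegral_mono hb
      _ ≤ WE s := hsuper s hsC
      _ = ENNReal.ofReal (if s ∈ C then (0:ℝ) else (WE s).toReal) := by
          rw [if_neg hsC, ENNReal.ofReal_toReal (hWfin s hsI)]
  · intro s hsI hsC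
    simp only [if_neg hsC]
    exact ENNReal.toReal_pos (by intro h0; exact absurd (h0 ▸ hWE1 s) (by simp))
      (hWfin s hsI)
  · intro s hsC
    simp only [if_pos hsC]
  · exact hUC
  · intro r hr
    obtain ⟨N, hN⟩ := hKey r hr
    refine ⟨ENNReal.ofReal ((2⁻¹ : ℝ) ^ (N + 2)), ENNReal.ofReal_pos.mpr (by positivity), ?_⟩
    intro s hsI hsC hWle
    simp only [if_neg hsC] at hWle
    obtain ⟨haN, hUle⟩ := hN s hsI hsC hWle
    have hx : ∃ n, a n ≤ T s (RE C n) := ⟨N, haN⟩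
    have hstep := hUstep s hsC hx
    have hfind : Nat.find hx = U s := (hUfind s hx).symm
    rw [hfind] at hstep
    refine le_trans ?_ hstep
    apply ENNReal.ofReal_le_ofReal
    apply pow_le_pow_of_le_one (by norm_num) (by norm_num)
    have : U s ≤ N := hUle
    omega
  · intro r hr
    obtain ⟨N, hN⟩ := hKey r hr
    refine ⟨N, fun s hsI hWle => ?_⟩
    by_cases hsC : s ∈ C
    · rw [hUC s hsC]; exact Nat.zero_le N
    · simp only [if_neg hsC] at hWle
      exact (hN s hsI hsC hWle).2


end PRC

open PRC in
/-- completeness of Proof Rule #1 for almost-sure reactivity on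
countable state spaces.  If the reactivity property holds almost surely, then all the
conditions of Proof Rule #1 can be satisfied with `μV₀ = 0`. -/
theorem proof_rule_one_complete_almost_sure
    {S : Type*} [MeasurableSpace S] [DiscreteMeasurableSpace S] [Countable S]
    (P : Kernel S S) [IsMarkovKernel P]
    (T : Kernel S (ℕ → S)) [IsMarkovKernel T] (hT : IsTrajKernel P T)
    (μ : Measure S) [IsProbabilityMeasure μ]
    (k : ℕ) (A B : Fin k → Set S)
    (hprob : (μ.bind (fun s => (T s : Measure (ℕ → S))))
      (⋂ i, finVisits (A i) ∪ infVisits (B i)) = 1) :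
    ∃ (I : Set S) (V₀ : S → ℝ) (J : Fin k → Set S)
      (V W : Fin k → S → ℝ) (U : Fin k → S → ℕ),
      (∀ s, 0 ≤ V₀ s) ∧
      (∀ i s, 0 ≤ V i s) ∧ (∀ i s, 0 ≤ W i s) ∧
      (∀ i, J i ⊆ I \ A i) ∧
      (∀ i, ∀ s ∉ A i,
        ∫⁻ u, ENNReal.ofReal (V i u) ∂(P s) ≤ ENNReal.ofReal (V i s)) ∧
      (∀ i, ∀ s ∈ A i, 1 ≤ V i s) ∧
      (∀ i, ∃ γ : ℝ, 0 < γ ∧ ∀ s ∈ J i, V i s ≤ 1 - γ) ∧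
      (∀ i, ∀ s ∈ I \ (B i ∪ J i),
        ∫⁻ u, ENNReal.ofReal (W i u) ∂(P s) ≤ ENNReal.ofReal (W i s)) ∧
      (∀ i, ∀ s ∈ I \ (B i ∪ J i), 0 < W i s) ∧
      (∀ i, ∀ s ∈ I ∩ (B i ∪ J i), W i s = 0 ∧ U i s = 0) ∧
      (∀ i, ∀ r : ℝ, 0 ≤ r → ∃ δ : ℝ≥0∞, 0 < δ ∧
        ∀ s ∈ I \ (B i ∪ J i), W i s ≤ r → δ ≤ P s {s' | U i s' < U i s}) ∧
      (∀ i, ∀ r : ℝ, 0 ≤ r → ∃ N : ℕ, ∀ s ∈ I, W i s ≤ r → U i s ≤ N) ∧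
      (∀ s ∈ I, ∫⁻ u, ENNReal.ofReal (V₀ u) ∂(P s) ≤ ENNReal.ofReal (V₀ s)) ∧
      (∀ s ∉ I, 1 ≤ V₀ s) ∧
      ∫⁻ s, ENNReal.ofReal (V₀ s) ∂μ = 0 := by
  classical
  set G : Set (ℕ → S) := ⋂ i, finVisits (A i) ∪ infVisits (B i) with hG_def
  have hGmeas : MeasurableSet G :=
    MeasurableSet.iInter fun i => (meas_finVisits (A i)).union (meas_infVisits (B i))
  have hGpre : ∀ s : S, consTraj s ⁻¹' G = G := by
    intro s
    simp only [hG_def, preimage_iInter, preimage_union, pre_finVisits, pre_infVisits]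
  set I : Set S := {s | T s G = 1} with hI_def
  have haeI : ∀ᵐ s ∂μ, s ∈ I := by
    have hbind : ∫⁻ s, T s G ∂μ = 1 := by
      rw [← Measure.bind_apply hGmeas (Kernel.measurable T).aemeasurable]
      exact hprob
    have h0 : ∫⁻ s, (1 - T s G) ∂μ = 0 := by
      rw [lintegral_sub (measurable_of_countable _) (by rw [hbind]; exact one_ne_top)
        (Filter.Eventually.of_forall fun s => prob_le_one)]
      simp [hbind]
    have hae := (lintegral_eq_zero_iff (measurable_of_countable _)).mp h0
    filter_upwards [hae] with s hs
    rw [Pi.zero_apply] at hs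
    exact le_antisymm prob_le_one (tsub_eq_zero_iff_le.mp hs)
  set J : Fin k → Set S := fun i =>
    {u | u ∈ I ∧ u ∉ A i ∧ T u (reachE (A i)) ≤ 2⁻¹} with hJ_def
  have hreach : ∀ i : Fin k, ∀ s ∈ I, T s (reachE (B i ∪ J i)) = 1 := by
    intro i s hsI
    set K : Set S := {v | v ∉ A i ∧ 2⁻¹ < T v (reachE (A i))} with hK_def
    have hKnull : ∀ u, T u (invEvent K) = 0 := T_inv_K_null P T hT (A i)
    set bad : Set (ℕ → S) :=
      (reachE Iᶜ ∪ ⋃ L, (shift^[L]) ⁻¹' invEvent K) ∪ Gᶜ with hbad_def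
    have hbadnull : T s bad = 0 := by
      refine measure_union_null (measure_union_null ?_ ?_) ?_
      · have hstay := T_stay_null P T hT hGmeas hGpre (hsI : T s G = 1)
        have hIc : Iᶜ = {u : S | T u G ≠ 1} := by
          ext u; simp [hI_def]
        rw [hIc]
        exact hstay
      · exact measure_iUnion_null fun L =>
          T_shift_null P T hT (meas_invEvent K) hKnull L s
      · rw [measure_compl hGmeas (measure_ne_top _ _), (hsI : T s G = 1),
          measure_univ, tsub_self]
    have hsub : badᶜ ⊆ reachE (B i ∪ J i) := by
      intro ω hω
      simp only [hbad_def, compl_union, mem_inter_iff, mem_compl_iff] at hω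
      obtain ⟨⟨hstay, hshift⟩, hGc⟩ := hω
      have hGω : ω ∈ G := by simpa using hGc
      have hFI : ω ∈ finVisits (A i) ∪ infVisits (B i) := by
        have := mem_iInter.mp hGω i
        exact this
      have hstayI : ∀ n, ω n ∈ I := by
        intro n; by_contra hn
        exact hstay ⟨n, hn⟩
      cases hFI with
      | inl hfin =>
        obtain ⟨L, hL⟩ := hfin
        have hnotinv : ω ∉ (shift^[L]) ⁻¹' invEvent K := fun hmem =>
          hshift (mem_iUnion.mpr ⟨L, hmem⟩)
        have hex : ∃ j, (shift^[L]) ω j ∉ K := by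
          by_contra hall; push_neg at hall; exact hnotinv hall
        obtain ⟨j, hj⟩ := hex
        rw [shift_iterate] at hj
        have hnA : ω (j + L) ∉ A i := hL (j + L) (by omega)
        have hle : T (ω (j + L)) (reachE (A i)) ≤ 2⁻¹ := by
          by_contra hlt; push_neg at hlt; exact hj ⟨hnA, hlt⟩
        exact ⟨j + L, Or.inr ⟨hstayI _, hnA, hle⟩⟩
      | inr hinf =>
        obtain ⟨m, _, hm⟩ := hinf 0
        exact ⟨m, Or.inl hm⟩
    have h1 : (1 : ℝ≥0∞) ≤ T s (reachE (B i ∪ J i)) + T s bad := by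
      have huniv : (univ : Set (ℕ → S)) ⊆ reachE (B i ∪ J i) ∪ bad := by
        intro ω _
        by_cases h : ω ∈ bad
        · exact Or.inr h
        · exact Or.inl (hsub h)
      calc (1 : ℝ≥0∞) = T s univ := measure_univ.symm
        _ ≤ T s (reachE (B i ∪ J i) ∪ bad) := measure_mono huniv
        _ ≤ _ := measure_union_le _ _
    rw [hbadnull, add_zero] at h1
    exact le_antisymm prob_le_one h1
  choose W U hW0 hWsuper hWpos hWC hUC hWg hWh using
    fun i => exists_WU P T hT (B i ∪ J i) I (hreach i)
  refine ⟨I, fun s => if s ∈ I then 0 else 1, J,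
    fun i s => (T s (reachE (A i))).toReal, W, U,
    ?_, ?_, ?_, ?_, ?_, ?_, ?_, ?_, ?_, ?_, ?_, ?_, ?_, ?_, ?_⟩
  · intro s
    simp only []
    split <;> norm_num
  · intro i s; exact ENNReal.toReal_nonneg
  · intro i s; exact hW0 i s
  · intro i u hu
    exact ⟨hu.1, hu.2.1⟩
  · intro i s hsA
    have hcong : ∫⁻ u, ENNReal.ofReal ((T u (reachE (A i))).toReal) ∂(P s)
        = ∫⁻ u, T u (reachE (A i)) ∂(P s) :=
      lintegral_congr fun u => ENNReal.ofReal_toReal (measure_ne_top _ _)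
    rw [hcong, ← T_reach_rec P T hT hsA, ENNReal.ofReal_toReal (measure_ne_top _ _)]
  · intro i s hsA
    simp only []
    rw [T_reach_one P T hT hsA]
    simp
  · intro i
    refine ⟨2⁻¹, by norm_num, fun s hs => ?_⟩
    have hle : T s (reachE (A i)) ≤ 2⁻¹ := hs.2.2
    have := ENNReal.toReal_mono (by simp) hle
    rw [ENNReal.toReal_inv] at this
    norm_num at this ⊢
    linarith
  · intro i s hs
    exact hWsuper i s hs.1 hs.2
  · intro i s hs
    exact hWpos i s hs.1 hs.2
  · intro i s hs
    exact ⟨hWC i s hs.2, hUC i s hs.2⟩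
  · intro i r hr
    obtain ⟨δ, hδ, hδ2⟩ := hWg i r hr
    exact ⟨δ, hδ, fun s hs hW => hδ2 s hs.1 hs.2 hW⟩
  · intro i r hr
    obtain ⟨N, hN⟩ := hWh i r hr
    exact ⟨N, fun s hs hW => hN s hs hW⟩
  · intro s hsI
    have hPs : P s Iᶜ = 0 := by
      have := P_notI_null P T hT hGmeas hGpre (hsI : T s G = 1)
      have hIc : Iᶜ = {u : S | T u G ≠ 1} := by ext u; simp [hI_def]
      rw [hIc]
      exact this
    have heq : (fun u => ENNReal.ofReal (if u ∈ I then (0:ℝ) else 1))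
        = Iᶜ.indicator (1 : S → ℝ≥0∞) := by
      funext u
      by_cases hu : u ∈ I <;> simp [hu, indicator_of_mem, indicator_of_notMem]
    rw [heq, lintegral_indicator_one MeasurableSet.of_discrete, hPs]
    exact zero_le
  · intro s hsI
    simp [hsI]
  · rw [lintegral_eq_zero_iff (measurable_of_countable _)]
    filter_upwards [haeI] with s hs
    simp [hs]
end
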